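/- arXiv:2102.03963 — 2 statements merged into one kernel-verified Lean document; each statement's English description precedes it below -/
import Mathlib

section
/- If M and N are isometries (M^H M = I, N^H N = I) with M^H N = A/‖A‖_F for a matrix A with SVD A = Σᵢ σᵢ uᵢ vᵢ^H, then the reflection product W = (2NN^H − I)(2MM^H − I) satisfies W(M uᵢ) = (2σᵢ/‖A‖_F) N vᵢ − M uᵢ. -/
open Matrix

/-- If `M` and `N` are isometries (`Mᴴ M = I`, `Nᴴ N = I`) into a common space
with `Mᴴ N = A/‖A‖_F`, and `(u, v)` is a unit singular pair of `A` with singular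
value `σᵢ` (`A v = σᵢ u`, `Aᴴ u = σᵢ v`), then the reflection product
`W = (2NNᴴ − I)(2MMᴴ − I)` satisfies `W (M u) = (2σᵢ/‖A‖_F) N v − M u`. -/
theorem reflection_on_Mu (D Q n : ℕ) (A : Matrix (Fin Q) (Fin n) ℂ)
    (Mi : Matrix (Fin D) (Fin Q) ℂ) (Ni : Matrix (Fin D) (Fin n) ℂ)
    (F : ℝ) (hF : F = Real.sqrt (∑ q, ∑ j, ‖A q j‖ ^ 2)) (hF0 : 0 < F)
    (hM : Miᴴ * Mi = 1) (hN : Niᴴ * Ni = 1)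
    (hMN : Miᴴ * Ni = ((F : ℂ)⁻¹) • A)
    (u : Fin Q → ℂ) (v : Fin n → ℂ) (σi : ℝ) (hσ : 0 < σi)
    (hu : star u ⬝ᵥ u = 1) (hv : star v ⬝ᵥ v = 1)
    (hAv : A.mulVec v = (σi : ℂ) • u) (hAu : Aᴴ.mulVec u = (σi : ℂ) • v) :
    (((2 : ℂ) • (Ni * Niᴴ) - 1) * ((2 : ℂ) • (Mi * Miᴴ) - 1)).mulVec (Mi.mulVec u) =
      ((2 * σi / F : ℝ) : ℂ) • Ni.mulVec v - Mi.mulVec u := by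
  have hNM : Niᴴ * Mi = ((F : ℂ)⁻¹) • Aᴴ := by
    have := congrArg conjTranspose hMN
    simpa [conjTranspose_mul, conjTranspose_smul, Complex.star_def,
      Complex.conj_ofReal] using this
  have h1 : (((2 : ℂ) • (Mi * Miᴴ) - 1)).mulVec (Mi.mulVec u) = Mi.mulVec u := by
    rw [sub_mulVec, smul_mulVec, one_mulVec, mulVec_mulVec, Matrix.mul_assoc, hM,
      Matrix.mul_one]
    simp [two_smul]
  rw [← mulVec_mulVec, h1, sub_mulVec, smul_mulVec, one_mulVec,
    mulVec_mulVec, Matrix.mul_assoc, hNM]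
  rw [← mulVec_mulVec, smul_mulVec, hAu]
  rw [mulVec_smul, mulVec_smul]
  have : ((2 * σi / F : ℝ) : ℂ) = (2 : ℂ) * ((F : ℂ)⁻¹ * (σi : ℂ)) := by
    push_cast
    field_simp
  rw [this]
  module
end

section
/- Under the same hypotheses (M, N isometries with M^H N = A/‖A‖_F, A = Σᵢ σᵢ uᵢ vᵢ^H), W(N vᵢ) = (4σᵢ²/‖A‖_F² − 1) N vᵢ − (2σᵢ/‖A‖_F) M uᵢ; in particular the two-dimensional subspace span{M uᵢ, N vᵢ} is invariant under W. -/
open Matrix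

/-- Under the same hypotheses (`M`, `N` isometries with `Mᴴ N = A/‖A‖_F`, and a
unit singular pair `A v = σᵢ u`, `Aᴴ u = σᵢ v` with `σᵢ > 0`), the reflection
product `W = (2NNᴴ − I)(2MMᴴ − I)` satisfies
`W (N v) = (4σᵢ²/‖A‖_F² − 1) N v − (2σᵢ/‖A‖_F) M u`; in particular the
subspace `span{M u, N v}` is invariant under `W`. -/
theorem reflection_on_Nv (D Q n : ℕ) (A : Matrix (Fin Q) (Fin n) ℂ)
    (Mi : Matrix (Fin D) (Fin Q) ℂ) (Ni : Matrix (Fin D) (Fin n) ℂ)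
    (F : ℝ) (hF : F = Real.sqrt (∑ q, ∑ j, ‖A q j‖ ^ 2)) (hF0 : 0 < F)
    (hM : Miᴴ * Mi = 1) (hN : Niᴴ * Ni = 1)
    (hMN : Miᴴ * Ni = ((F : ℂ)⁻¹) • A)
    (u : Fin Q → ℂ) (v : Fin n → ℂ) (σi : ℝ) (hσ : 0 < σi)
    (hu : star u ⬝ᵥ u = 1) (hv : star v ⬝ᵥ v = 1)
    (hAv : A.mulVec v = (σi : ℂ) • u) (hAu : Aᴴ.mulVec u = (σi : ℂ) • v) :
    (((2 : ℂ) • (Ni * Niᴴ) - 1) * ((2 : ℂ) • (Mi * Miᴴ) - 1)).mulVec (Ni.mulVec v) =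
        ((4 * σi ^ 2 / F ^ 2 - 1 : ℝ) : ℂ) • Ni.mulVec v -
          ((2 * σi / F : ℝ) : ℂ) • Mi.mulVec u ∧
      ∀ x ∈ Submodule.span ℂ ({Mi.mulVec u, Ni.mulVec v} : Set (Fin D → ℂ)),
        (((2 : ℂ) • (Ni * Niᴴ) - 1) * ((2 : ℂ) • (Mi * Miᴴ) - 1)).mulVec x ∈
          Submodule.span ℂ ({Mi.mulVec u, Ni.mulVec v} : Set (Fin D → ℂ)) := by
  have hFne : (F : ℂ) ≠ 0 := by exact_mod_cast hF0.ne'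
  have hNM : Niᴴ * Mi = ((F : ℂ)⁻¹) • Aᴴ := by
    have := congrArg conjTranspose hMN
    simpa [conjTranspose_mul, conjTranspose_smul, Complex.star_def,
      Complex.conj_ofReal] using this
  set a := Mi.mulVec u with ha
  set b := Ni.mulVec v with hb
  have key1 : Miᴴ.mulVec b = ((σi : ℂ) / F) • u := by
    rw [hb, mulVec_mulVec, hMN, smul_mulVec, hAv, smul_smul]
    congr 1; field_simp
  have key2 : Niᴴ.mulVec a = ((σi : ℂ) / F) • v := by
    rw [ha, mulVec_mulVec, hNM, smul_mulVec, hAu, smul_smul]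
    congr 1; field_simp
  have key3 : Niᴴ.mulVec b = v := by
    rw [hb, mulVec_mulVec, hN, one_mulVec]
  have key4 : Miᴴ.mulVec a = u := by
    rw [ha, mulVec_mulVec, hM, one_mulVec]
  set W : Matrix (Fin D) (Fin D) ℂ :=
    ((2 : ℂ) • (Ni * Niᴴ) - 1) * ((2 : ℂ) • (Mi * Miᴴ) - 1) with hW
  have stepM : ∀ x : Fin D → ℂ, (((2 : ℂ) • (Mi * Miᴴ) - 1)).mulVec x =
      (2 : ℂ) • Mi.mulVec (Miᴴ.mulVec x) - x := by
    intro x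
    rw [sub_mulVec, smul_mulVec, one_mulVec, mulVec_mulVec]
  have stepN : ∀ x : Fin D → ℂ, (((2 : ℂ) • (Ni * Niᴴ) - 1)).mulVec x =
      (2 : ℂ) • Ni.mulVec (Niᴴ.mulVec x) - x := by
    intro x
    rw [sub_mulVec, smul_mulVec, one_mulVec, mulVec_mulVec]
  have hWb : W.mulVec b =
      ((4 * σi ^ 2 / F ^ 2 - 1 : ℝ) : ℂ) • b - ((2 * σi / F : ℝ) : ℂ) • a := by
    rw [hW, ← mulVec_mulVec, stepM, key1, mulVec_smul, ← ha, stepN,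
      mulVec_sub, mulVec_smul, mulVec_smul, key2, key3,
      mulVec_sub, mulVec_smul, mulVec_smul, mulVec_smul, ← hb]
    have hc1 : ((4 * σi ^ 2 / F ^ 2 - 1 : ℝ) : ℂ) =
        (2:ℂ) * ((2:ℂ) * (((σi:ℂ)/F) * ((σi:ℂ)/F))) - 1 := by
      push_cast; field_simp; ring
    have hc2 : ((2 * σi / F : ℝ) : ℂ) = (2:ℂ) * ((σi:ℂ)/F) := by
      push_cast; ring
    rw [hc1, hc2]
    module
  have hWa : W.mulVec a = ((2 * σi / F : ℝ) : ℂ) • b - a := by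
    rw [hW, ← mulVec_mulVec, stepM, key4, ← ha, stepN,
      mulVec_sub, mulVec_smul, key2, mulVec_sub, mulVec_smul, mulVec_smul, ← hb]
    have hc2 : ((2 * σi / F : ℝ) : ℂ) = (2:ℂ) * ((σi:ℂ)/F) := by
      push_cast; ring
    rw [hc2]
    module
  refine ⟨hWb, ?_⟩
  intro x hx
  set S := Submodule.span ℂ ({a, b} : Set (Fin D → ℂ)) with hS
  have haS : a ∈ S := Submodule.subset_span (by simp)
  have hbS : b ∈ S := Submodule.subset_span (by simp)
  refine Submodule.span_induction ?_ ?_ ?_ ?_ hx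
  · rintro y (rfl | rfl)
    · rw [hWa]; exact sub_mem (Submodule.smul_mem _ _ hbS) haS
    · rw [hWb]; exact sub_mem (Submodule.smul_mem _ _ hbS) (Submodule.smul_mem _ _ haS)
  · simp [mulVec_zero, Submodule.zero_mem]
  · intro y z _ _ hy hz
    rw [mulVec_add]; exact add_mem hy hz
  · intro c y _ hy
    rw [mulVec_smul]; exact Submodule.smul_mem _ _ hy
end
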